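/- Forward–backward algorithm for the comixture problem: let f : H → ℝ be convex, differentiable on H with β-Lipschitzian gradient, where β ∈ (0,2), set h = comix(L_k,g_k)_{1≤k≤p}, and suppose the problem of minimizing f + h over H has a solution. Let x₀ ∈ H and iterate for n = 0,1,…: y_n = x_n − ∇f(x_n); x_{n+1} = y_n + ∑_{k=1}^p α_k L_k*(prox_{g_k}(L_k y_n) − L_k y_n). Then (x_n)_{n∈ℕ} converges weakly to a minimizer of f + h over H. -/

import Mathlib

open scoped RealInnerProductSpace
open Filter

noncomputable section

variable {K : Type*} [NormedAddCommGroup K] [InnerProductSpace ℝ K]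

/-- Normalized quadratic kernel `Q_K = ‖·‖²/2` (as an extended real). -/
def QK (x : K) : EReal := ((‖x‖ ^ 2 / 2 : ℝ) : EReal)

/-- Fenchel conjugate `f* : u ↦ sup_x (⟨x,u⟩ − f(x))`. -/
def fconj (f : K → EReal) (u : K) : EReal := ⨆ x : K, ((⟪x, u⟫ : ℝ) : EReal) - f x

/-- Moreau envelope `f □ Q_K : x ↦ inf_z (f(z) + ‖x−z‖²/2)`. -/
def menv (f : K → EReal) (x : K) : EReal := ⨅ z : K, f z + QK (x - z)

/-- Convexity of an extended-real-valued function. -/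
def ConvexFnE (f : K → EReal) : Prop :=
  ∀ x y : K, ∀ a b : ℝ, 0 ≤ a → 0 ≤ b → a + b = 1 →
    f (a • x + b • y) ≤ (a : EReal) * f x + (b : EReal) * f y

/-- Properness: nowhere `−∞` and somewhere finite. -/
def ProperFn (f : K → EReal) : Prop := (∀ x, f x ≠ ⊥) ∧ ∃ x, f x ≠ ⊤

/-- The class `Γ₀(K)` of proper lower semicontinuous convex functions. -/
def Gamma0 (f : K → EReal) : Prop := ProperFn f ∧ LowerSemicontinuous f ∧ ConvexFnE f

/-- `P` is the proximity operator of `g`: for every `x`, `P x` is the unique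
minimizer of `z ↦ g(z) + ‖x−z‖²/2`. -/
def IsProx (g : K → EReal) (P : K → K) : Prop :=
  ∀ x : K,
    (∀ z : K, g (P x) + QK (x - P x) ≤ g z + QK (x - z)) ∧
    (∀ z : K, (∀ w : K, g z + QK (x - z) ≤ g w + QK (x - w)) → z = P x)

/-- The convex subdifferential of `f` at `x`. -/
def subdiff (f : K → EReal) (x : K) : Set K :=
  {u : K | ∀ z : K, ((⟪z - x, u⟫ : ℝ) : EReal) + f x ≤ f z}

variable {H : Type*} [NormedAddCommGroup H] [InnerProductSpace ℝ H]
  {p : ℕ} {G : Fin p → Type*} [∀ k, NormedAddCommGroup (G k)]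
  [∀ k, InnerProductSpace ℝ (G k)]

/-- The proximal comixture `comix(L_k, g_k)_{1≤k≤p}
  = ((∑_k α_k (g_k □ Q_{G_k}) ∘ L_k)* − Q_H)*`. -/
def comix (L : ∀ k, H →L[ℝ] G k) (g : ∀ k, (G k) → EReal) (α : Fin p → ℝ) :
    H → EReal :=
  fconj (fun u => fconj (fun x => ∑ k, (α k : EReal) * menv (g k) (L k x)) u - QK u)


/-! ### small real helpers -/

open Set


lemma le_zero_of_forall_le_mul {c d : ℝ} (h : ∀ t : ℝ, t ∈ Set.Ioc (0:ℝ) 1 → c ≤ t * d) :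
    c ≤ 0 := by
  by_contra hc
  push_neg at hc
  rcases le_or_gt d 0 with hd | hd
  · have := h 1 ⟨one_pos, le_refl 1⟩
    nlinarith
  · have ht : min 1 (c / (2 * d)) ∈ Set.Ioc (0:ℝ) 1 :=
      ⟨lt_min one_pos (by positivity), min_le_left _ _⟩
    have h2 := h _ ht
    have h3 : min 1 (c / (2 * d)) * d ≤ (c / (2 * d)) * d := by
      apply mul_le_mul_of_nonneg_right (min_le_right _ _) hd.le
    have : (c / (2 * d)) * d = c / 2 := by field_simp
    nlinarith

/-! ### prox facts -/

section Prox

variable {g : K → EReal} {P : K → K} (hg : Gamma0 g) (hP : IsProx g P)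
include hg hP

lemma gP_real (x : K) : ∃ r : ℝ, g (P x) = (r : EReal) := by
  have hbot := hg.1.1 (P x)
  obtain ⟨z0, hz0⟩ := hg.1.2
  have htop : g (P x) ≠ ⊤ := by
    intro htop
    have h1 := (hP x).1 z0
    rw [htop] at h1
    have : (⊤ : EReal) + QK (x - P x) = ⊤ := by
      rw [QK]; exact EReal.top_add_coe _
    rw [this] at h1
    have h2 : g z0 + QK (x - z0) < ⊤ := by
      rw [QK]
      exact EReal.add_lt_top hz0 (EReal.coe_ne_top _)
    exact absurd (top_le_iff.mp h1) h2.ne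
  exact ⟨(g (P x)).toReal, (EReal.coe_toReal htop hbot).symm⟩

/-- variational inequality for the prox -/
lemma prox_varineq (x z : K) :
    ((⟪x - P x, z - P x⟫ : ℝ) : EReal) + g (P x) ≤ g z := by
  obtain ⟨r, hr⟩ := gP_real hg hP x
  rcases eq_or_ne (g z) ⊤ with hz | hz
  · rw [hz]; exact le_top
  have hzbot := hg.1.1 z
  set s := (g z).toReal with hs
  have hgz : g z = (s : EReal) := (EReal.coe_toReal hz hzbot).symm
  -- real inequality via limit
  have key : ⟪x - P x, z - P x⟫ - (s - r) ≤ 0 := by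
    apply le_zero_of_forall_le_mul (d := ‖z - P x‖^2/2)
    intro t ht
    obtain ⟨ht0, ht1⟩ := ht
    -- convex combination point
    have hcomb := hg.2.2 (P x) z (1 - t) t (by linarith) ht0.le (by ring)
    have h1 := (hP x).1 ((1 - t) • P x + t • z)
    have hle := le_trans h1 (by
      have := add_le_add_left hcomb (QK (x - ((1 - t) • P x + t • z)))
      exact this)
    rw [hr, hgz] at hle
    -- all real now
    have harith : ((1 - t : ℝ) : EReal) * (r : EReal) + (t : EReal) * (s : EReal)
        + QK (x - ((1 - t) • P x + t • z))
        = (((1 - t) * r + t * s + ‖x - ((1 - t) • P x + t • z)‖^2/2 : ℝ) : EReal) := by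
      rw [QK, ← EReal.coe_mul, ← EReal.coe_mul, ← EReal.coe_add, ← EReal.coe_add]
    have harith2 : (r : EReal) + QK (x - P x) = ((r + ‖x - P x‖^2/2 : ℝ) : EReal) := by
      rw [QK, ← EReal.coe_add]
    rw [harith, harith2] at hle
    have hreal := EReal.coe_le_coe_iff.mp hle
    have hexp : x - ((1 - t) • P x + t • z) = (x - P x) - t • (z - P x) := by
      module
    rw [hexp] at hreal
    have hnorm : ‖(x - P x) - t • (z - P x)‖^2
        = ‖x - P x‖^2 - 2 * t * ⟪x - P x, z - P x⟫ + t^2 * ‖z - P x‖^2 := by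
      rw [norm_sub_sq_real, norm_smul, real_inner_smul_right]
      simp [Real.norm_eq_abs, abs_of_pos ht0]
      ring
    rw [hnorm] at hreal
    have h3 : t * ⟪x - P x, z - P x⟫ - t * (s - r) ≤ t^2 * ‖z - P x‖^2/2 := by nlinarith
    have := mul_le_mul_of_nonneg_left h3 (le_of_lt (inv_pos.mpr ht0))
    calc ⟪x - P x, z - P x⟫ - (s - r)
        = t⁻¹ * (t * ⟪x - P x, z - P x⟫ - t * (s - r)) := by field_simp
      _ ≤ t⁻¹ * (t^2 * ‖z - P x‖^2/2) := this
      _ = t * (‖z - P x‖^2/2) := by field_simp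
  rw [hr, hgz, ← EReal.coe_add, EReal.coe_le_coe_iff]
  linarith

end Prox

section Prox2

variable {g : K → EReal} {P : K → K} (hg : Gamma0 g) (hP : IsProx g P)
include hg hP

/-- variational inequality, real form -/
lemma prox_varineq_real (x z : K) :
    ⟪x - P x, P z - P x⟫ + (g (P x)).toReal ≤ (g (P z)).toReal := by
  obtain ⟨r, hr⟩ := gP_real hg hP x
  obtain ⟨s, hs⟩ := gP_real hg hP z
  have := prox_varineq hg hP x (P z)
  rw [hr, hs, ← EReal.coe_add, EReal.coe_le_coe_iff] at this
  rw [hr, hs]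
  simpa using this

/-- firm nonexpansiveness of the prox -/
lemma prox_firm (a b : K) : ‖P a - P b‖^2 ≤ ⟪a - b, P a - P b⟫ := by
  have h1 := prox_varineq_real hg hP a b
  have h2 := prox_varineq_real hg hP b a
  have e1 : ⟪b - P b, P a - P b⟫ = -⟪b - P b, P b - P a⟫ := by
    rw [← inner_neg_right]; congr 1; abel
  have e2 : ⟪a - P a, P b - P a⟫ = -⟪a - P a, P a - P b⟫ := by
    rw [← inner_neg_right]; congr 1; abel
  have key : ⟪(a - P a) - (b - P b), P a - P b⟫ ≥ 0 := by
    rw [inner_sub_left]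
    linarith [h1, h2, e2]
  have expand : ⟪(a - P a) - (b - P b), P a - P b⟫
      = ⟪a - b, P a - P b⟫ - ‖P a - P b‖^2 := by
    have : (a - P a) - (b - P b) = (a - b) - (P a - P b) := by abel
    rw [this, inner_sub_left, real_inner_self_eq_norm_sq]
  linarith [key, expand.symm.le]

lemma prox_nonexpansive (a b : K) : ‖P a - P b‖ ≤ ‖a - b‖ := by
  have h := prox_firm hg hP a b
  have h2 := real_inner_le_norm (a - b) (P a - P b)
  rcases eq_or_ne (P a - P b) 0 with h0 | h0
  · simp [h0]
  · have hn : 0 < ‖P a - P b‖ := norm_pos_iff.mpr h0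
    nlinarith

/-- the Moreau envelope value, real -/
def envR (g : K → EReal) (P : K → K) (x : K) : ℝ := (g (P x)).toReal + ‖x - P x‖^2/2

lemma menv_eq_envR (x : K) : menv g x = ((envR g P x : ℝ) : EReal) := by
  obtain ⟨r, hr⟩ := gP_real hg hP x
  have hR : envR g P x = r + ‖x - P x‖^2/2 := by rw [envR, hr]; simp
  apply le_antisymm
  · calc menv g x ≤ g (P x) + QK (x - P x) := iInf_le _ (P x)
      _ = ((envR g P x : ℝ) : EReal) := by rw [hr, QK, ← EReal.coe_add, hR]
  · apply le_iInf
    intro z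
    calc ((envR g P x : ℝ) : EReal) = g (P x) + QK (x - P x) := by
          rw [hr, QK, ← EReal.coe_add, hR]
      _ ≤ g z + QK (x - z) := (hP x).1 z

/-- two-sided quadratic estimate for the envelope -/
lemma envR_est (x y : K) :
    |envR g P y - envR g P x - ⟪x - P x, y - x⟫| ≤ (5/2) * ‖y - x‖^2 := by
  obtain ⟨r, hr⟩ := gP_real hg hP x
  obtain ⟨s, hs⟩ := gP_real hg hP y
  have hex : envR g P x = r + ‖x - P x‖^2/2 := by rw [envR, hr]; simp
  have hey : envR g P y = s + ‖y - P y‖^2/2 := by rw [envR, hs]; simp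
  -- upper bound: env y ≤ g(Px) + ‖y - Px‖²/2
  have hup : envR g P y ≤ r + ‖y - P x‖^2/2 := by
    have h := (hP y).1 (P x)
    rw [hs, hr, QK, QK, ← EReal.coe_add, ← EReal.coe_add, EReal.coe_le_coe_iff] at h
    linarith [hey.symm.le, h]
  -- lower bound: env x ≤ g(Py) + ‖x - Py‖²/2
  have hlo : envR g P x ≤ s + ‖x - P y‖^2/2 := by
    have h := (hP x).1 (P y)
    rw [hr, hs, QK, QK, ← EReal.coe_add, ← EReal.coe_add, EReal.coe_le_coe_iff] at h
    linarith
  have hyx : ‖y - P x‖^2 = ‖x - P x‖^2 + 2*⟪x - P x, y - x⟫ + ‖y - x‖^2 := by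
    have : y - P x = (x - P x) + (y - x) := by abel
    rw [this, norm_add_sq_real]
  have hxy : ‖x - P y‖^2 = ‖y - P y‖^2 - 2*⟪y - P y, y - x⟫ + ‖y - x‖^2 := by
    have : x - P y = (y - P y) - (y - x) := by abel
    rw [this, norm_sub_sq_real]
  have hinner : |⟪y - P y, y - x⟫ - ⟪x - P x, y - x⟫| ≤ 2 * ‖y - x‖^2 := by
    have heq : ⟪y - P y, y - x⟫ - ⟪x - P x, y - x⟫ = ⟪(y - x) - (P y - P x), y - x⟫ := by
      rw [show (y - x) - (P y - P x) = (y - P y) - (x - P x) by abel]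
      simp [inner_sub_left]
    rw [heq]
    have h1 : ‖(y - x) - (P y - P x)‖ ≤ 2 * ‖y - x‖ := by
      calc ‖(y - x) - (P y - P x)‖ ≤ ‖y - x‖ + ‖P y - P x‖ := norm_sub_le _ _
        _ ≤ ‖y - x‖ + ‖y - x‖ := by linarith [prox_nonexpansive hg hP y x]
        _ = 2 * ‖y - x‖ := by ring
    calc |⟪(y - x) - (P y - P x), y - x⟫| ≤ ‖(y - x) - (P y - P x)‖ * ‖y - x‖ :=
          abs_real_inner_le_norm _ _
      _ ≤ 2 * ‖y - x‖ * ‖y - x‖ := by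
          apply mul_le_mul_of_nonneg_right h1 (norm_nonneg _)
      _ = 2 * ‖y - x‖^2 := by ring
  rw [abs_le]
  constructor
  · -- env y - env x ≥ ⟪x-Px, y-x⟫ - (5/2)d²
    have := hlo
    rw [hxy] at this
    have habs := abs_le.mp hinner
    nlinarith
  · have := hup
    rw [hyx] at this
    nlinarith

end Prox2

section AuxCalc
variable {K : Type*} [NormedAddCommGroup K] [InnerProductSpace ℝ K]

section Calc
variable [CompleteSpace K]

lemma hasGradientAt_of_quad {φ : K → ℝ} {a w : K} {C : ℝ}
    (h : ∀ y, |φ y - φ w - ⟪a, y - w⟫| ≤ C * ‖y - w‖^2) : HasGradientAt φ a w := by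
  rw [HasGradientAt, hasGradientAtFilter_iff_isLittleO]
  rw [Asymptotics.isLittleO_iff]
  intro ε hε
  set D := |C| with hD
  have hC : 0 ≤ D := abs_nonneg C
  have habs : ∀ y : K, |φ y - φ w - ⟪a, y - w⟫| ≤ D * ‖y - w‖^2 := fun y =>
    (h y).trans (mul_le_mul_of_nonneg_right (le_abs_self C) (sq_nonneg _))
  rw [Metric.eventually_nhds_iff]
  refine ⟨ε / (D + 1), by positivity, fun y hy => ?_⟩
  have hd : dist y w < ε / (D + 1) := hy
  rw [dist_eq_norm] at hd
  have h1 := habs y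
  rw [Real.norm_eq_abs]
  calc |φ y - φ w - ⟪a, y - w⟫| ≤ D * ‖y - w‖^2 := h1
    _ = D * ‖y - w‖ * ‖y - w‖ := by ring
    _ ≤ ε * ‖y - w‖ := by
        apply mul_le_mul_of_nonneg_right _ (norm_nonneg _)
        calc D * ‖y - w‖ ≤ D * (ε / (D + 1)) :=
              mul_le_mul_of_nonneg_left hd.le hC
          _ ≤ ε := by
              rw [div_eq_mul_inv]
              have h3 : D * (ε * (D + 1)⁻¹) = ε * (D * (D+1)⁻¹) := by ring
              rw [h3]
              have h4 : D * (D+1)⁻¹ ≤ 1 := by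
                rw [mul_inv_le_iff₀ (by linarith)]; linarith
              nlinarith

lemma line_hasDerivAt {φ : K → ℝ} {gφ : K → K}
    (hgrad : ∀ w, HasGradientAt φ (gφ w) w) (c d : K) (t : ℝ) :
    HasDerivAt (fun s : ℝ => φ (c + s • d)) ⟪gφ (c + t • d), d⟫ t := by
  have hline : HasDerivAt (fun s : ℝ => c + s • d) d t := by
    simpa using ((hasDerivAt_id t).smul_const d).const_add c
  have hf := (hgrad (c + t • d)).hasFDerivAt
  have := hf.comp_hasDerivAt t hline
  simp [InnerProductSpace.toDual_apply_apply] at this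
  exact this

end Calc

/-- comparison of two functions via their derivatives on `[0,1]` -/
lemma sub_le_sub_of_deriv_le {u v : ℝ → ℝ} {u' v' : ℝ → ℝ}
    (hu : ∀ t ∈ Icc (0:ℝ) 1, HasDerivAt u (u' t) t)
    (hv : ∀ t ∈ Icc (0:ℝ) 1, HasDerivAt v (v' t) t)
    (hle : ∀ t ∈ Icc (0:ℝ) 1, u' t ≤ v' t) :
    u 1 - u 0 ≤ v 1 - v 0 := by
  set w := fun t => v t - u t with hw
  have hmono : MonotoneOn w (Icc (0:ℝ) 1) := by
    apply monotoneOn_of_deriv_nonneg (convex_Icc 0 1)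
    · intro t ht
      exact (((hv t ht).sub (hu t ht)).continuousAt).continuousWithinAt
    · intro t ht
      rw [interior_Icc] at ht
      exact (((hv t (Ioo_subset_Icc_self ht)).sub (hu t (Ioo_subset_Icc_self ht)))).differentiableAt.differentiableWithinAt
    · intro t ht
      rw [interior_Icc] at ht
      have hd := ((hv t (Ioo_subset_Icc_self ht)).sub (hu t (Ioo_subset_Icc_self ht))).deriv
      rw [show w = v - u from rfl, hd]
      linarith [hle t (Ioo_subset_Icc_self ht)]
  have := hmono (left_mem_Icc.mpr zero_le_one) (right_mem_Icc.mpr zero_le_one) zero_le_one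
  simp only [hw] at this
  linarith

section Descent
variable {φ : K → ℝ} {gφ : K → K}

/-- descent lemma -/
lemma descent_lemma (hline : ∀ c d t, HasDerivAt (fun s : ℝ => φ (c + s • d)) ⟪gφ (c + t • d), d⟫ t)
    {Lc : ℝ} (hLc : 0 ≤ Lc) (hlip : ∀ a b, ‖gφ a - gφ b‖ ≤ Lc * ‖a - b‖) (x d : K) :
    φ (x + d) ≤ φ x + ⟪gφ x, d⟫ + Lc / 2 * ‖d‖^2 := by
  have hu : ∀ t ∈ Icc (0:ℝ) 1, HasDerivAt (fun s : ℝ => φ (x + s • d)) ⟪gφ (x + t • d), d⟫ t :=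
    fun t _ => hline x d t
  have hv : ∀ t ∈ Icc (0:ℝ) 1, HasDerivAt
      (fun t : ℝ => t * ⟪gφ x, d⟫ + Lc * ‖d‖^2 / 2 * t^2) (⟪gφ x, d⟫ + Lc * ‖d‖^2 * t) t := by
    intro t _
    have h1 : HasDerivAt (fun t : ℝ => t * ⟪gφ x, d⟫) ⟪gφ x, d⟫ t := by
      simpa using (hasDerivAt_id t).mul_const ⟪gφ x, d⟫
    have h2 : HasDerivAt (fun t : ℝ => Lc * ‖d‖^2 / 2 * t^2) (Lc * ‖d‖^2 / 2 * (2 * t)) t := by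
      have := (hasDerivAt_pow 2 t).const_mul (Lc * ‖d‖^2 / 2)
      simpa using this
    have := h1.add h2
    exact this.congr_deriv (by ring)
  have hle : ∀ t ∈ Icc (0:ℝ) 1, ⟪gφ (x + t • d), d⟫ ≤ ⟪gφ x, d⟫ + Lc * ‖d‖^2 * t := by
    intro t ht
    have h1 : ⟪gφ (x + t • d), d⟫ - ⟪gφ x, d⟫ = ⟪gφ (x + t • d) - gφ x, d⟫ := by
      rw [inner_sub_left]
    have h2 : ⟪gφ (x + t • d) - gφ x, d⟫ ≤ ‖gφ (x + t • d) - gφ x‖ * ‖d‖ := real_inner_le_norm _ _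
    have h3 : ‖gφ (x + t • d) - gφ x‖ ≤ Lc * ‖t • d‖ := by
      have := hlip (x + t • d) x
      simpa using this
    have h4 : ‖t • d‖ = t * ‖d‖ := by
      rw [norm_smul, Real.norm_eq_abs, abs_of_nonneg ht.1]
    rw [h4] at h3
    have h5 := mul_le_mul_of_nonneg_right h3 (norm_nonneg d)
    have h6 : ‖d‖^2 = ‖d‖ * ‖d‖ := sq ‖d‖
    nlinarith [h1, h2, h5, h6]
  have := sub_le_sub_of_deriv_le hu hv hle
  simp only [one_smul, zero_smul, add_zero, one_pow, mul_one, mul_zero, zero_pow] at this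
  calc φ (x + d) ≤ φ x + (⟪gφ x, d⟫ + Lc * ‖d‖^2/2) := by
        have h0 : (0:ℝ)^2 = 0 := by norm_num
        nlinarith [this]
    _ = φ x + ⟪gφ x, d⟫ + Lc / 2 * ‖d‖^2 := by ring

/-- gradient inequality from monotone gradient -/
lemma gradineq_of_monotone
    (hline : ∀ c d t, HasDerivAt (fun s : ℝ => φ (c + s • d)) ⟪gφ (c + t • d), d⟫ t)
    (hmono : ∀ a b, 0 ≤ ⟪gφ a - gφ b, a - b⟫) (x d : K) :
    φ x + ⟪gφ x, d⟫ ≤ φ (x + d) := by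
  have hu : ∀ t ∈ Icc (0:ℝ) 1, HasDerivAt (fun t : ℝ => t * ⟪gφ x, d⟫) ⟪gφ x, d⟫ t := by
    intro t _
    simpa using (hasDerivAt_id t).mul_const ⟪gφ x, d⟫
  have hv : ∀ t ∈ Icc (0:ℝ) 1, HasDerivAt (fun s : ℝ => φ (x + s • d)) ⟪gφ (x + t • d), d⟫ t :=
    fun t _ => hline x d t
  have hle : ∀ t ∈ Icc (0:ℝ) 1, ⟪gφ x, d⟫ ≤ ⟪gφ (x + t • d), d⟫ := by
    intro t ht
    rcases eq_or_lt_of_le ht.1 with h0 | h0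
    · rw [← h0]
      simp
    · have := hmono (x + t • d) x
      have heq : (x + t • d) - x = t • d := by abel
      rw [heq, inner_sub_left] at this
      have h2 : ⟪gφ (x + t • d), t • d⟫ = t * ⟪gφ (x + t • d), d⟫ := real_inner_smul_right _ _ _
      have h3 : ⟪gφ x, t • d⟫ = t * ⟪gφ x, d⟫ := real_inner_smul_right _ _ _
      rw [h2, h3] at this
      nlinarith
  have := sub_le_sub_of_deriv_le hu hv hle
  simp only [one_smul, zero_smul, add_zero, one_mul, zero_mul] at this
  linarith

end Descent

/-- derivative bounded by slopes -/
lemma deriv_le_of_slope {u : ℝ → ℝ} {u'0 M : ℝ} (h : HasDerivAt u u'0 0)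
    (hb : ∀ t ∈ Set.Ioc (0:ℝ) 1, (u t - u 0) / t ≤ M) : u'0 ≤ M := by
  have hs := hasDerivAt_iff_tendsto_slope.mp h
  have hs2 : Tendsto (slope u 0) (nhdsWithin 0 (Set.Ioi 0)) (nhds u'0) :=
    hs.mono_left (nhdsWithin_mono _ (by intro z hz; simpa using ne_of_gt hz))
  apply le_of_tendsto hs2
  filter_upwards [Ioc_mem_nhdsGT_of_mem (by exact ⟨le_refl _, zero_lt_one⟩ : (0:ℝ) ∈ Set.Ico 0 1)] with t ht
  rw [slope_def_field]
  simpa using hb t ht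

end AuxCalc

section AuxWeak


variable {E : Type*} [NormedAddCommGroup E] [InnerProductSpace ℝ E] [CompleteSpace E]

/-- evaluation of inner products is weakly continuous -/
lemma weak_inner_continuous (u : E) :
    Continuous fun w : WeakSpace ℝ E => ⟪(toWeakSpace ℝ E).symm w, u⟫ := by
  have h := WeakBilin.eval_continuous ((topDualPairing ℝ E).flip)
      (InnerProductSpace.toDual ℝ E u)
  refine Continuous.congr (f := fun w : WeakSpace ℝ E => (topDualPairing ℝ E).flip w (InnerProductSpace.toDual ℝ E u)) h (fun w => ?_)
  have : (topDualPairing ℝ E).flip w (InnerProductSpace.toDual ℝ E u)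
      = InnerProductSpace.toDual ℝ E u ((toWeakSpace ℝ E).symm w) := rfl
  rw [this, InnerProductSpace.toDual_apply_apply, real_inner_comm]

/-- closed balls are weakly compact in a Hilbert space -/
lemma isCompact_weak_closedBall (R : ℝ) :
    IsCompact ((toWeakSpace ℝ E) '' Metric.closedBall (0:E) R) := by
  classical
  set j : WeakDual ℝ E → WeakSpace ℝ E := fun l =>
    toWeakSpace ℝ E ((InnerProductSpace.toDual ℝ E).symm (WeakDual.toStrongDual l)) with hj
  have hcont : Continuous j := by
    apply WeakBilin.continuous_of_continuous_eval
    intro y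
    set v := (InnerProductSpace.toDual ℝ E).symm y with hv
    have key : (fun l : WeakDual ℝ E => (topDualPairing ℝ E).flip (j l) y)
        = fun l : WeakDual ℝ E => l v := by
      funext l
      have h1 : (topDualPairing ℝ E).flip (j l) y
          = y ((InnerProductSpace.toDual ℝ E).symm (WeakDual.toStrongDual l)) := rfl
      rw [h1]
      set m := (InnerProductSpace.toDual ℝ E).symm (WeakDual.toStrongDual l) with hm
      have h2 : y m = ⟪v, m⟫ := by
        rw [hv]
        rw [← InnerProductSpace.toDual_apply_apply]
        congr 1
        simp
      have h3 : (l : E → ℝ) v = ⟪m, v⟫ := by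
        have : WeakDual.toStrongDual l = InnerProductSpace.toDual ℝ E m := by simp [hm]
        have h4 : WeakDual.toStrongDual l v = InnerProductSpace.toDual ℝ E m v := by rw [this]
        rw [InnerProductSpace.toDual_apply_apply] at h4
        exact h4
      rw [h2, h3, real_inner_comm]
    rw [key]
    exact WeakDual.eval_continuous v
  have hcomp := (WeakDual.isCompact_closedBall (𝕜 := ℝ) (E := E) 0 R).image hcont
  convert hcomp using 1
  ext w
  constructor
  · rintro ⟨x, hx, rfl⟩
    refine ⟨WeakDual.toStrongDual.symm (InnerProductSpace.toDual ℝ E x), ?_, ?_⟩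
    · simp only [Set.mem_preimage, LinearEquiv.apply_symm_apply]
      rw [Metric.mem_closedBall] at hx ⊢
      rw [dist_zero_right] at hx ⊢
      simpa using hx
    · simp only [hj, LinearEquiv.apply_symm_apply, LinearEquiv.symm_apply_apply,
        LinearIsometryEquiv.symm_apply_apply]
  · rintro ⟨l, hl, rfl⟩
    refine ⟨(InnerProductSpace.toDual ℝ E).symm (WeakDual.toStrongDual l), ?_, rfl⟩
    rw [Set.mem_preimage, Metric.mem_closedBall, dist_zero_right] at hl
    rw [Metric.mem_closedBall, dist_zero_right]
    calc ‖(InnerProductSpace.toDual ℝ E).symm (WeakDual.toStrongDual l)‖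
        = ‖WeakDual.toStrongDual l‖ := by
          rw [← LinearIsometryEquiv.norm_map (InnerProductSpace.toDual ℝ E)]
          simp
      _ ≤ R := hl

/-- main abstract weak convergence result for iterations of quasi-averaged maps -/
lemma weak_convergence_km (A : E → E) (x : ℕ → E) (κ : ℝ) (hκ : 0 < κ)
    (hkey : ∀ a b, ‖A a - A b‖^2 ≤ ‖a - b‖^2 - κ * ‖(a - A a) - (b - A b)‖^2)
    (hiter : ∀ n, x (n+1) = A (x n)) (hfix : ∃ z, A z = z) :
    ∃ zbar : E, A zbar = zbar ∧
      ∀ u : E, Tendsto (fun n => ⟪x n, u⟫) atTop (nhds ⟪zbar, u⟫) := by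
  classical
  obtain ⟨z0, hz0⟩ := hfix
  -- nonexpansiveness
  have hne : ∀ a b, ‖A a - A b‖ ≤ ‖a - b‖ := by
    intro a b
    have h := hkey a b
    have h2 : ‖A a - A b‖^2 ≤ ‖a - b‖^2 := by nlinarith [sq_nonneg ‖(a - A a) - (b - A b)‖]
    exact (pow_le_pow_iff_left₀ (norm_nonneg _) (norm_nonneg _) two_ne_zero).mp h2
  -- Fejér monotonicity wrt any fixed point
  have fejer : ∀ z, A z = z → ∀ n, ‖x (n+1) - z‖^2 ≤ ‖x n - z‖^2 - κ * ‖x n - A (x n)‖^2 := by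
    intro z hz n
    have h := hkey (x n) z
    rw [hiter n]
    have heq : x n - A (x n) - (z - A z) = x n - A (x n) := by rw [hz]; abel
    rw [heq, hz] at h
    exact h
  have fejer_mono : ∀ z, A z = z → Antitone fun n => ‖x n - z‖^2 := by
    intro z hz
    apply antitone_nat_of_succ_le
    intro n
    have := fejer z hz n
    nlinarith [sq_nonneg ‖x n - A (x n)‖]
  have fejer_conv : ∀ z, A z = z → ∃ l : ℝ, Tendsto (fun n => ‖x n - z‖^2) atTop (nhds l) := by
    intro z hz
    have hbdd : BddBelow (Set.range fun n => ‖x n - z‖^2) := by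
      refine ⟨0, ?_⟩
      rintro r ⟨n, rfl⟩
      positivity
    exact ⟨_, tendsto_atTop_ciInf (fejer_mono z hz) hbdd⟩
  -- residual tends to zero
  have hres : Tendsto (fun n => ‖x n - A (x n)‖) atTop (nhds 0) := by
    obtain ⟨l, hl⟩ := fejer_conv z0 hz0
    have hdiff : Tendsto (fun n => ‖x n - z0‖^2 - ‖x (n+1) - z0‖^2) atTop (nhds 0) := by
      have h2 : Tendsto (fun n => ‖x (n+1) - z0‖^2) atTop (nhds l) := hl.comp (tendsto_add_atTop_nat 1)
      simpa using hl.sub h2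
    have hsq : Tendsto (fun n => ‖x n - A (x n)‖^2) atTop (nhds 0) := by
      apply squeeze_zero (fun n => sq_nonneg _)
      · intro n
        have h := fejer z0 hz0 n
        have : ‖x n - A (x n)‖^2 ≤ (‖x n - z0‖^2 - ‖x (n+1) - z0‖^2) / κ := by
          rw [le_div_iff₀ hκ]
          nlinarith
        exact this
      · have := hdiff.div_const κ
        simpa using this
    have : Tendsto (fun n => Real.sqrt (‖x n - A (x n)‖^2)) atTop (nhds (Real.sqrt 0)) :=
      (Real.continuous_sqrt.tendsto 0).comp hsq
    simpa [Real.sqrt_sq_eq_abs, abs_of_nonneg (norm_nonneg _)] using this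
  -- uniform bound
  set R : ℝ := ‖x 0 - z0‖ + ‖z0‖ with hR
  have hbound : ∀ n, ‖x n‖ ≤ R := by
    intro n
    have h1 : ‖x n - z0‖^2 ≤ ‖x 0 - z0‖^2 := fejer_mono z0 hz0 (Nat.zero_le n)
    have h2 : ‖x n - z0‖ ≤ ‖x 0 - z0‖ := by
      nlinarith [norm_nonneg (x n - z0), norm_nonneg (x 0 - z0)]
    calc ‖x n‖ = ‖(x n - z0) + z0‖ := by congr 1; abel
      _ ≤ ‖x n - z0‖ + ‖z0‖ := norm_add_le _ _
      _ ≤ R := by rw [hR]; linarith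
  -- move to the weak space
  set wx : ℕ → WeakSpace ℝ E := fun n => toWeakSpace ℝ E (x n) with hwx
  set Kc : Set (WeakSpace ℝ E) := (toWeakSpace ℝ E) '' Metric.closedBall (0:E) R with hKc
  have hKcomp : IsCompact Kc := isCompact_weak_closedBall R
  have hmem : ∀ n, wx n ∈ Kc := by
    intro n
    exact ⟨x n, by rw [Metric.mem_closedBall, dist_zero_right]; exact hbound n, rfl⟩
  have hle : map wx atTop ≤ 𝓟 Kc := by
    rw [le_principal_iff]
    exact mem_map.mpr (Eventually.of_forall hmem)
  -- properties of weak cluster points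
  have cluster_props : ∀ z' : WeakSpace ℝ E, ClusterPt z' (map wx atTop) →
      A ((toWeakSpace ℝ E).symm z') = (toWeakSpace ℝ E).symm z' := by
    intro z' hz'
    set zE := (toWeakSpace ℝ E).symm z' with hzE
    -- the pulled-back filter
    set ℓ : Filter ℕ := atTop ⊓ comap wx (nhds z') with hℓ
    have hℓne : ℓ.NeBot := by
      rw [ClusterPt] at hz'
      have hpp := Filter.push_pull wx atTop (nhds z')
      have h2 : (map wx atTop ⊓ nhds z').NeBot := by rwa [inf_comm] at hz'
      rw [← hpp] at h2
      exact Filter.map_neBot_iff wx |>.mp h2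
    have htend : Tendsto wx ℓ (nhds z') :=
      Filter.Tendsto.mono_left tendsto_comap inf_le_right
    have hinner : ∀ u : E, Tendsto (fun n => ⟪x n, u⟫) ℓ (nhds ⟪zE, u⟫) := by
      intro u
      have hc := weak_inner_continuous (E := E) u
      have := (hc.tendsto z').comp htend
      convert this using 1
      rfl
    have hresℓ : Tendsto (fun n => ‖x n - A (x n)‖) ℓ (nhds 0) :=
      hres.mono_left inf_le_left
    -- demiclosedness computation
    have hA : ‖zE - A zE‖^2 ≤ 0 := by
      have ineq : ∀ n, 2 * ⟪x n - zE, zE - A zE⟫ + ‖zE - A zE‖^2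
          ≤ ‖x n - A (x n)‖^2 + 2 * ‖x n - A (x n)‖ * ‖x n - zE‖ := by
        intro n
        have h1 : ‖x n - A zE‖ ≤ ‖x n - A (x n)‖ + ‖x n - zE‖ := by
          calc ‖x n - A zE‖ ≤ ‖x n - A (x n)‖ + ‖A (x n) - A zE‖ := by
                have := norm_add_le (x n - A (x n)) (A (x n) - A zE)
                simpa using this
            _ ≤ ‖x n - A (x n)‖ + ‖x n - zE‖ := by linarith [hne (x n) zE]
        have h2 : ‖x n - A zE‖^2 = ‖x n - zE‖^2 + 2*⟪x n - zE, zE - A zE⟫ + ‖zE - A zE‖^2 := by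
          have : x n - A zE = (x n - zE) + (zE - A zE) := by abel
          rw [this, norm_add_sq_real]
        have h3 : ‖x n - A zE‖^2 ≤ (‖x n - A (x n)‖ + ‖x n - zE‖)^2 :=
          pow_le_pow_left₀ (norm_nonneg _) h1 2
        nlinarith [h2, h3]
      -- limits along ℓ
      have hxz : ∀ n, ‖x n - zE‖ ≤ R + ‖zE‖ := by
        intro n
        calc ‖x n - zE‖ ≤ ‖x n‖ + ‖zE‖ := norm_sub_le _ _
          _ ≤ R + ‖zE‖ := by linarith [hbound n]
      have hlhs : Tendsto (fun n => 2 * ⟪x n - zE, zE - A zE⟫ + ‖zE - A zE‖^2) ℓ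
          (nhds (‖zE - A zE‖^2)) := by
        have h1 : Tendsto (fun n => ⟪x n - zE, zE - A zE⟫) ℓ (nhds 0) := by
          have h2 := hinner (zE - A zE)
          have h3 : ∀ n, ⟪x n - zE, zE - A zE⟫ = ⟪x n, zE - A zE⟫ - ⟪zE, zE - A zE⟫ := by
            intro n; rw [inner_sub_left]
          simp only [h3]
          have := h2.sub (tendsto_const_nhds (x := ⟪zE, zE - A zE⟫) (f := ℓ))
          simpa using this
        have := (h1.const_mul 2).add (tendsto_const_nhds (x := ‖zE - A zE‖^2) (f := ℓ))
        simpa using this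
      have hrhs : Tendsto (fun n => ‖x n - A (x n)‖^2 + 2 * ‖x n - A (x n)‖ * ‖x n - zE‖) ℓ
          (nhds 0) := by
        have h1 : Tendsto (fun n => ‖x n - A (x n)‖^2) ℓ (nhds 0) := by
          have := hresℓ.mul hresℓ
          simpa [sq] using this
        have h2 : Tendsto (fun n => 2 * ‖x n - A (x n)‖ * ‖x n - zE‖) ℓ (nhds 0) := by
          apply squeeze_zero (fun n => by positivity)
            (g := fun n => 2 * ‖x n - A (x n)‖ * (R + ‖zE‖))
          · intro n
            have := hxz n
            have hnn : 0 ≤ 2 * ‖x n - A (x n)‖ := by positivity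
            exact mul_le_mul_of_nonneg_left this hnn
          · have := (hresℓ.const_mul 2).mul_const (R + ‖zE‖)
            simpa using this
        have := h1.add h2
        simpa using this
      exact le_of_tendsto_of_tendsto' hlhs hrhs ineq
    have : zE - A zE = 0 := by
      have h0 : ‖zE - A zE‖^2 = 0 := le_antisymm hA (sq_nonneg _)
      have : ‖zE - A zE‖ = 0 := by nlinarith [norm_nonneg (zE - A zE)]
      exact norm_eq_zero.mp this
    have := sub_eq_zero.mp this
    exact this.symm
  -- existence of a cluster point
  have hnb : (map wx atTop).NeBot := map_neBot
  obtain ⟨zb, hzbK, hzb⟩ := hKcomp.exists_clusterPt hle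
  set zbar := (toWeakSpace ℝ E).symm zb with hzbar
  have hzbarfix : A zbar = zbar := cluster_props zb hzb
  -- uniqueness of cluster points
  have huniq : ∀ z' : WeakSpace ℝ E, ClusterPt z' (map wx atTop) → z' = zb := by
    intro z' hz'
    set zE := (toWeakSpace ℝ E).symm z' with hzE'
    have hfix' : A zE = zE := cluster_props z' hz'
    -- inner products with the difference converge along atTop
    obtain ⟨l1, hl1⟩ := fejer_conv zE hfix'
    obtain ⟨l2, hl2⟩ := fejer_conv zbar hzbarfix
    set d := zE - zbar with hd
    have hs : ∀ n, ⟪x n, d⟫ =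
        (‖x n - zbar‖^2 - ‖x n - zE‖^2 + ‖zE‖^2 - ‖zbar‖^2) / 2 := by
      intro n
      have e1 : ‖x n - zE‖^2 = ‖x n‖^2 - 2*⟪x n, zE⟫ + ‖zE‖^2 := norm_sub_sq_real _ _
      have e2 : ‖x n - zbar‖^2 = ‖x n‖^2 - 2*⟪x n, zbar⟫ + ‖zbar‖^2 := norm_sub_sq_real _ _
      rw [hd, inner_sub_right]
      rw [e1, e2]
      ring
    have hstend : Tendsto (fun n => ⟪x n, d⟫) atTop
        (nhds ((l2 - l1 + ‖zE‖^2 - ‖zbar‖^2) / 2)) := by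
      simp only [hs]
      exact (((hl2.sub hl1).add_const (‖zE‖^2)).sub_const (‖zbar‖^2)).div_const 2
    -- two cluster point filters
    have key : ∀ w : WeakSpace ℝ E, ClusterPt w (map wx atTop) →
        ⟪(toWeakSpace ℝ E).symm w, d⟫ = (l2 - l1 + ‖zE‖^2 - ‖zbar‖^2) / 2 := by
      intro w hw
      set ℓ : Filter ℕ := atTop ⊓ comap wx (nhds w) with hℓ
      have hℓne : ℓ.NeBot := by
        rw [ClusterPt] at hw
        have hpp := Filter.push_pull wx atTop (nhds w)
        have h2 : (map wx atTop ⊓ nhds w).NeBot := by rwa [inf_comm] at hw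
        rw [← hpp] at h2
        exact Filter.map_neBot_iff wx |>.mp h2
      have htend : Tendsto wx ℓ (nhds w) :=
        Filter.Tendsto.mono_left tendsto_comap inf_le_right
      have hinner : Tendsto (fun n => ⟪x n, d⟫) ℓ (nhds ⟪(toWeakSpace ℝ E).symm w, d⟫) := by
        have hc := weak_inner_continuous (E := E) d
        have := (hc.tendsto w).comp htend
        convert this using 1
        rfl
      have h2 : Tendsto (fun n => ⟪x n, d⟫) ℓ (nhds ((l2 - l1 + ‖zE‖^2 - ‖zbar‖^2) / 2)) :=
        hstend.mono_left inf_le_left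
      exact tendsto_nhds_unique hinner h2
    have k1 := key z' hz'
    have k2 := key zb hzb
    have : ⟪zE - zbar, d⟫ = 0 := by
      rw [inner_sub_left]
      rw [hzE'] at k1
      rw [← hzbar] at k2
      rw [k1, k2]
      ring
    rw [hd] at this
    have : zE = zbar := by
      have h0 := real_inner_self_eq_norm_sq (zE - zbar)
      rw [this] at h0
      have : ‖zE - zbar‖ = 0 := by nlinarith [norm_nonneg (zE - zbar)]
      have := norm_eq_zero.mp this
      exact sub_eq_zero.mp this
    rw [hzE', hzbar] at this
    exact (toWeakSpace ℝ E).symm.injective this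
  -- convergence via ultrafilters
  have hconv : Tendsto wx atTop (nhds zb) := by
    rw [Tendsto]
    have hrw := Filter.iSup_ultrafilter_le_eq (map wx atTop)
    rw [← hrw]
    apply iSup_le
    intro U
    apply iSup_le
    intro hU
    have hUK : Kc ∈ U := hU (hle (le_principal_iff.mp (le_refl _)))
    obtain ⟨a, haK, ha⟩ := hKcomp.ultrafilter_le_nhds U (le_principal_iff.mpr hUK)
    have hcl : ClusterPt a (map wx atTop) := by
      rw [ClusterPt]
      exact Filter.neBot_of_le (le_inf ha hU)
    rw [huniq a hcl] at ha
    exact ha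
  refine ⟨zbar, hzbarfix, fun u => ?_⟩
  have hc := weak_inner_continuous (E := E) u
  have := (hc.tendsto zb).comp hconv
  convert this using 1
  rfl

end AuxWeak

lemma EReal.coe_finset_sum' {ι : Type*} (s : Finset ι) (f : ι → ℝ) :
    ((∑ k ∈ s, f k : ℝ) : EReal) = ∑ k ∈ s, ((f k : ℝ) : EReal) := by
  classical
  induction s using Finset.induction_on with
  | empty => simp
  | insert a s hnot ih =>
      rw [Finset.sum_insert hnot, Finset.sum_insert hnot, EReal.coe_add, ih]

section MainCtx

variable {H : Type*} [NormedAddCommGroup H] [InnerProductSpace ℝ H]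
  {p : ℕ} {G : Fin p → Type*} [∀ k, NormedAddCommGroup (G k)]
  [∀ k, InnerProductSpace ℝ (G k)]
variable [CompleteSpace H] [∀ k, CompleteSpace (G k)]
variable (L : ∀ k, H →L[ℝ] G k) (g : ∀ k, (G k) → EReal) (α : Fin p → ℝ) (P : ∀ k, G k → G k)

/-- the (nonlinear) operator `N = ∑ αₖ Lₖ* (Id − proxₖ) Lₖ` -/
def Nmap (w : H) : H :=
  ∑ k, α k • (ContinuousLinearMap.adjoint (L k)) (L k w - P k (L k w))

/-- the real-valued function `φ = ∑ αₖ (gₖ □ Q) ∘ Lₖ` -/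
def phiR (w : H) : ℝ := ∑ k, α k * envR (g k) (P k) (L k w)

def Tmap (w : H) : H := w - Nmap L α P w

def cpsi (y : H) : ℝ := ⟪y, Nmap L α P y⟫ - phiR L g α P y - ‖Nmap L α P y‖^2/2

def cT (y : H) : ℝ := ⟪Tmap L α P y, Nmap L α P y⟫ - cpsi L g α P y

variable {L g α P}
variable (hg : ∀ k, Gamma0 (g k)) (hP : ∀ k, IsProx (g k) (P k))
  (hL : ∀ k, ‖L k‖ ≤ 1) (hα : ∀ k, α k ∈ Set.Ioc (0 : ℝ) 1) (hαsum : ∑ k, α k = 1)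

section NFirm
include hg hP

/-- firm nonexpansiveness of each `Id - Pₖ` -/
lemma R_firm (k : Fin p) (u v : G k) :
    ‖(u - P k u) - (v - P k v)‖^2 ≤ ⟪u - v, (u - P k u) - (v - P k v)⟫ := by
  have hfirm := prox_firm (hg k) (hP k) u v
  have e1 : (u - P k u) - (v - P k v) = (u - v) - (P k u - P k v) := by abel
  have h2 : ‖(u - v) - (P k u - P k v)‖^2
      = ‖u - v‖^2 - 2*⟪u - v, P k u - P k v⟫ + ‖P k u - P k v‖^2 := norm_sub_sq_real _ _
  have h3 : ⟪u - v, (u - v) - (P k u - P k v)⟫ = ‖u - v‖^2 - ⟪u - v, P k u - P k v⟫ := by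
    rw [inner_sub_right, real_inner_self_eq_norm_sq]
  rw [e1, h2, h3]
  linarith [hfirm]

lemma Nmap_sub (a b : H) : Nmap L α P a - Nmap L α P b
    = ∑ k, α k • (ContinuousLinearMap.adjoint (L k))
        ((L k a - P k (L k a)) - (L k b - P k (L k b))) := by
  rw [Nmap, Nmap, ← Finset.sum_sub_distrib]
  congr 1
  funext k
  rw [← smul_sub, ← map_sub]

include hL hα hαsum

lemma Nmap_firm (a b : H) :
    ‖Nmap L α P a - Nmap L α P b‖^2 ≤ ⟪a - b, Nmap L α P a - Nmap L α P b⟫ := by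
  classical
  set d : ∀ k, G k := fun k => (L k a - P k (L k a)) - (L k b - P k (L k b)) with hd
  have hsub := Nmap_sub (L := L) (g := g) (α := α) (P := P) hg hP a b
  -- inner product lower bound
  have hinner : ∑ k, α k * ‖d k‖^2 ≤ ⟪a - b, Nmap L α P a - Nmap L α P b⟫ := by
    rw [hsub, inner_sum]
    apply Finset.sum_le_sum
    intro k _
    rw [real_inner_smul_right, ContinuousLinearMap.adjoint_inner_right, map_sub]
    have := R_firm hg hP k (L k a) (L k b)
    have hk := (hα k).1
    calc α k * ‖d k‖^2 ≤ α k * ⟪L k a - L k b, d k⟫ := by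
          apply mul_le_mul_of_nonneg_left _ hk.le
          exact this
      _ = α k * ⟪L k a - L k b, d k⟫ := rfl
  -- norm upper bound
  have hnorm2 : ‖Nmap L α P a - Nmap L α P b‖^2 ≤ ∑ k, α k * ‖d k‖^2 := by
    have h1 : ‖Nmap L α P a - Nmap L α P b‖ ≤ ∑ k, α k * ‖d k‖ := by
      rw [hsub]
      calc ‖∑ k, α k • (ContinuousLinearMap.adjoint (L k)) (d k)‖
          ≤ ∑ k, ‖α k • (ContinuousLinearMap.adjoint (L k)) (d k)‖ := norm_sum_le _ _
        _ ≤ ∑ k, α k * ‖d k‖ := by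
            apply Finset.sum_le_sum
            intro k _
            rw [norm_smul, Real.norm_eq_abs, abs_of_pos (hα k).1]
            apply mul_le_mul_of_nonneg_left _ (hα k).1.le
            calc ‖(ContinuousLinearMap.adjoint (L k)) (d k)‖
                ≤ ‖ContinuousLinearMap.adjoint (L k)‖ * ‖d k‖ :=
                  ContinuousLinearMap.le_opNorm _ _
              _ ≤ 1 * ‖d k‖ := by
                  apply mul_le_mul_of_nonneg_right _ (norm_nonneg _)
                  rw [LinearIsometryEquiv.norm_map]
                  exact hL k
              _ = ‖d k‖ := one_mul _
    have h2 : (∑ k, α k * ‖d k‖)^2 ≤ ∑ k, α k * ‖d k‖^2 := by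
      have hcs := Finset.sum_mul_sq_le_sq_mul_sq Finset.univ
        (fun k => Real.sqrt (α k)) (fun k => Real.sqrt (α k) * ‖d k‖)
      have e1 : ∀ k : Fin p, Real.sqrt (α k) * (Real.sqrt (α k) * ‖d k‖) = α k * ‖d k‖ := by
        intro k
        rw [← mul_assoc, Real.mul_self_sqrt (hα k).1.le]
      have e2 : ∀ k : Fin p, Real.sqrt (α k) ^ 2 = α k := fun k => Real.sq_sqrt (hα k).1.le
      have e3 : ∀ k : Fin p, (Real.sqrt (α k) * ‖d k‖)^2 = α k * ‖d k‖^2 := by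
        intro k
        rw [mul_pow, e2]
      simp only [e1, e2, e3] at hcs
      calc (∑ k, α k * ‖d k‖)^2 ≤ (∑ k, α k) * ∑ k, α k * ‖d k‖^2 := hcs
        _ = ∑ k, α k * ‖d k‖^2 := by rw [hαsum, one_mul]
    have h3 : 0 ≤ ∑ k, α k * ‖d k‖ :=
      Finset.sum_nonneg fun k _ => mul_nonneg (hα k).1.le (norm_nonneg _)
    nlinarith [pow_le_pow_left₀ (norm_nonneg (Nmap L α P a - Nmap L α P b)) h1 2]
  linarith

lemma Nmap_mono (a b : H) : 0 ≤ ⟪Nmap L α P a - Nmap L α P b, a - b⟫ := by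
  have := Nmap_firm hg hP hL hα hαsum a b
  rw [real_inner_comm]
  nlinarith [sq_nonneg ‖Nmap L α P a - Nmap L α P b‖]

lemma Nmap_lip (a b : H) : ‖Nmap L α P a - Nmap L α P b‖ ≤ ‖a - b‖ := by
  have h := Nmap_firm hg hP hL hα hαsum a b
  have h2 := real_inner_le_norm (a - b) (Nmap L α P a - Nmap L α P b)
  rcases eq_or_ne (Nmap L α P a - Nmap L α P b) 0 with h0 | h0
  · simp [h0]
  · have hn : 0 < ‖Nmap L α P a - Nmap L α P b‖ := norm_pos_iff.mpr h0
    nlinarith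

/-- quadratic estimate for `φ` -/
lemma phiR_quad (w y : H) :
    |phiR L g α P y - phiR L g α P w - ⟪Nmap L α P w, y - w⟫| ≤ (5/2) * ‖y - w‖^2 := by
  classical
  have hNin : ⟪Nmap L α P w, y - w⟫
      = ∑ k, α k * ⟪L k w - P k (L k w), L k (y - w)⟫ := by
    rw [Nmap, sum_inner]
    congr 1
    funext k
    rw [real_inner_smul_left, ContinuousLinearMap.adjoint_inner_left]
  have hsum : phiR L g α P y - phiR L g α P w - ⟪Nmap L α P w, y - w⟫
      = ∑ k, α k * (envR (g k) (P k) (L k y) - envR (g k) (P k) (L k w)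
          - ⟪L k w - P k (L k w), L k (y - w)⟫) := by
    rw [hNin, phiR, phiR, ← Finset.sum_sub_distrib, ← Finset.sum_sub_distrib]
    congr 1
    funext k
    ring
  rw [hsum]
  calc |∑ k, α k * (envR (g k) (P k) (L k y) - envR (g k) (P k) (L k w)
          - ⟪L k w - P k (L k w), L k (y - w)⟫)|
      ≤ ∑ k, |α k * (envR (g k) (P k) (L k y) - envR (g k) (P k) (L k w)
          - ⟪L k w - P k (L k w), L k (y - w)⟫)| := Finset.abs_sum_le_sum_abs _ _
    _ ≤ ∑ k, α k * ((5/2) * ‖y - w‖^2) := by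
        apply Finset.sum_le_sum
        intro k _
        rw [abs_mul, abs_of_pos (hα k).1]
        apply mul_le_mul_of_nonneg_left _ (hα k).1.le
        have hest := envR_est (hg k) (hP k) (L k w) (L k y)
        have heq : L k y - L k w = L k (y - w) := (map_sub (L k) y w).symm
        rw [heq] at hest
        have hLk : ‖L k (y - w)‖ ≤ ‖y - w‖ := by
          calc ‖L k (y - w)‖ ≤ ‖L k‖ * ‖y - w‖ := ContinuousLinearMap.le_opNorm _ _
            _ ≤ 1 * ‖y - w‖ := mul_le_mul_of_nonneg_right (hL k) (norm_nonneg _)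
            _ = ‖y - w‖ := one_mul _
        calc |envR (g k) (P k) (L k y) - envR (g k) (P k) (L k w)
              - ⟪L k w - P k (L k w), L k (y - w)⟫| ≤ (5/2) * ‖L k (y - w)‖^2 := hest
          _ ≤ (5/2) * ‖y - w‖^2 := by
              apply mul_le_mul_of_nonneg_left _ (by norm_num)
              exact pow_le_pow_left₀ (norm_nonneg _) hLk 2
    _ = (5/2) * ‖y - w‖^2 := by
        rw [← Finset.sum_mul, hαsum, one_mul]

lemma phiR_grad (w : H) : HasGradientAt (phiR L g α P) (Nmap L α P w) w :=
  hasGradientAt_of_quad (fun y => phiR_quad hg hP hL hα hαsum w y)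

lemma phiR_line (c d : H) (t : ℝ) :
    HasDerivAt (fun s : ℝ => phiR L g α P (c + s • d)) ⟪Nmap L α P (c + t • d), d⟫ t :=
  line_hasDerivAt (fun w => phiR_grad hg hP hL hα hαsum w) c d t

lemma phiR_descent (x d : H) :
    phiR L g α P (x + d) ≤ phiR L g α P x + ⟪Nmap L α P x, d⟫ + 1/2 * ‖d‖^2 := by
  have h := descent_lemma (gφ := Nmap L α P) (phiR_line hg hP hL hα hαsum)
    (by norm_num : (0:ℝ) ≤ 1) (fun a b => by simpa using Nmap_lip hg hP hL hα hαsum a b) x d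
  linarith [h]

lemma phiR_gradineq (x d : H) :
    phiR L g α P x + ⟪Nmap L α P x, d⟫ ≤ phiR L g α P (x + d) :=
  gradineq_of_monotone (phiR_line hg hP hL hα hαsum)
    (fun a b => Nmap_mono hg hP hL hα hαsum a b) x d

omit hL hα hαsum in
lemma Phi_eq (x : H) :
    ∑ k, (α k : EReal) * menv (g k) (L k x) = ((phiR L g α P x : ℝ) : EReal) := by
  rw [phiR, EReal.coe_finset_sum']
  congr 1
  funext k
  rw [menv_eq_envR (hg k) (hP k), ← EReal.coe_mul]

omit hL hα hαsum in
lemma fconjPhi_eq (u : H) :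
    fconj (fun x : H => ∑ k, (α k : EReal) * menv (g k) (L k x)) u
      = ⨆ x : H, ((⟪x, u⟫ - phiR L g α P x : ℝ) : EReal) := by
  rw [fconj]
  congr 1
  funext x
  rw [Phi_eq hg hP, ← EReal.coe_sub]

omit hL hα hαsum in
lemma fconjPhi_ne_bot (v : H) :
    fconj (fun x : H => ∑ k, (α k : EReal) * menv (g k) (L k x)) v ≠ ⊥ := by
  intro hb
  have h := le_iSup (fun x : H => ((⟪x, v⟫ - phiR L g α P x : ℝ) : EReal)) 0
  rw [← fconjPhi_eq hg hP, hb] at h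
  exact absurd h (by simp)

lemma fconjPhi_at_grad (y : H) :
    fconj (fun x : H => ∑ k, (α k : EReal) * menv (g k) (L k x)) (Nmap L α P y)
      = ((⟪y, Nmap L α P y⟫ - phiR L g α P y : ℝ) : EReal) := by
  rw [fconjPhi_eq hg hP]
  apply le_antisymm
  · apply iSup_le
    intro x
    rw [EReal.coe_le_coe_iff]
    have hgi := phiR_gradineq hg hP hL hα hαsum y (x - y)
    have he : y + (x - y) = x := by abel
    rw [he] at hgi
    have e1 : ⟪Nmap L α P y, x - y⟫ = ⟪Nmap L α P y, x⟫ - ⟪Nmap L α P y, y⟫ :=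
      inner_sub_right _ _ _
    have c1 : ⟪Nmap L α P y, x⟫ = ⟪x, Nmap L α P y⟫ := real_inner_comm _ _
    have c2 : ⟪Nmap L α P y, y⟫ = ⟪y, Nmap L α P y⟫ := real_inner_comm _ _
    linarith
  · exact le_iSup (fun x : H => ((⟪x, Nmap L α P y⟫ - phiR L g α P x : ℝ) : EReal)) y

lemma fconjPhi_strong (y v : H) :
    ((cpsi L g α P y + ⟪v - Nmap L α P y, Tmap L α P y⟫ + ‖v‖^2/2 : ℝ) : EReal)
      ≤ fconj (fun x : H => ∑ k, (α k : EReal) * menv (g k) (L k x)) v := by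
  rw [fconjPhi_eq hg hP]
  refine le_trans ?_ (le_iSup _ (y + (v - Nmap L α P y)))
  rw [EReal.coe_le_coe_iff]
  simp only [cpsi, Tmap]
  have hdesc := phiR_descent hg hP hL hα hαsum y (v - Nmap L α P y)
  have e1 : ⟪y + (v - Nmap L α P y), v⟫ = ⟪y, v⟫ + ⟪v, v⟫ - ⟪Nmap L α P y, v⟫ := by
    rw [inner_add_left, inner_sub_left]
    ring
  have e2 : ⟪Nmap L α P y, v - Nmap L α P y⟫
      = ⟪Nmap L α P y, v⟫ - ⟪Nmap L α P y, Nmap L α P y⟫ := inner_sub_right _ _ _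
  have e3 : ‖v - Nmap L α P y‖^2 = ‖v‖^2 - 2*⟪v, Nmap L α P y⟫ + ‖Nmap L α P y‖^2 :=
    norm_sub_sq_real _ _
  have e4 : ⟪v - Nmap L α P y, y - Nmap L α P y⟫
      = ⟪v, y⟫ - ⟪v, Nmap L α P y⟫ - ⟪Nmap L α P y, y⟫ + ⟪Nmap L α P y, Nmap L α P y⟫ := by
    rw [inner_sub_left, inner_sub_right, inner_sub_right]
    ring
  have e5 : ⟪Nmap L α P y, Nmap L α P y⟫ = ‖Nmap L α P y‖^2 := real_inner_self_eq_norm_sq _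
  have e6 : ⟪v, v⟫ = ‖v‖^2 := real_inner_self_eq_norm_sq v
  have c1 : ⟪v, y⟫ = ⟪y, v⟫ := real_inner_comm _ _
  have c2 : ⟪Nmap L α P y, v⟫ = ⟪v, Nmap L α P y⟫ := real_inner_comm _ _
  have c3 : ⟪Nmap L α P y, y⟫ = ⟪y, Nmap L α P y⟫ := real_inner_comm _ _
  linarith [hdesc, e1, e2, e3, e4, e5, e6, c1, c2, c3]

/-- the subgradient inequality family for the comixture -/
lemma comix_lower (y w : H) :
    ((cT L g α P y + ⟪w - Tmap L α P y, Nmap L α P y⟫ : ℝ) : EReal) ≤ comix L g α w := by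
  rw [comix, fconj]
  refine le_trans ?_ (le_iSup _ (Nmap L α P y))
  rw [fconjPhi_at_grad hg hP hL hα hαsum, QK, ← EReal.coe_sub, ← EReal.coe_sub,
    EReal.coe_le_coe_iff]
  simp only [cT, cpsi]
  have e1 : ⟪w - Tmap L α P y, Nmap L α P y⟫
      = ⟪w, Nmap L α P y⟫ - ⟪Tmap L α P y, Nmap L α P y⟫ := inner_sub_left _ _ _
  have c1 : ⟪Nmap L α P y, w⟫ = ⟪w, Nmap L α P y⟫ := real_inner_comm _ _
  linarith [e1, c1]

lemma comix_at_T (y : H) : comix L g α (Tmap L α P y) = ((cT L g α P y : ℝ) : EReal) := by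
  apply le_antisymm
  · rw [comix, fconj]
    apply iSup_le
    intro v
    rcases eq_or_ne (fconj (fun x : H => ∑ k, (α k : EReal) * menv (g k) (L k x)) v) ⊤
      with htop | htop
    · rw [htop]
      have h1 : (⊤ : EReal) - QK v = ⊤ := by rw [QK]; exact EReal.top_sub_coe _
      rw [h1]
      have h2 : ((⟪v, Tmap L α P y⟫ : ℝ) : EReal) - ⊤ = ⊥ := by simp
      rw [h2]
      exact bot_le
    · have hbot := fconjPhi_ne_bot (L := L) (g := g) (α := α) (P := P) hg hP v
      obtain ⟨m, hm⟩ : ∃ m : ℝ,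
          fconj (fun x : H => ∑ k, (α k : EReal) * menv (g k) (L k x)) v = (m : EReal) :=
        ⟨_, (EReal.coe_toReal htop hbot).symm⟩
      have hstrong := fconjPhi_strong hg hP hL hα hαsum y v
      rw [hm, EReal.coe_le_coe_iff] at hstrong
      rw [hm, QK, ← EReal.coe_sub, ← EReal.coe_sub, EReal.coe_le_coe_iff]
      simp only [cT, cpsi]
      have c2 : ⟪Nmap L α P y, Tmap L α P y⟫ = ⟪Tmap L α P y, Nmap L α P y⟫ :=
        real_inner_comm _ _
      have c3 : ⟪v, Tmap L α P y⟫ = ⟪Tmap L α P y, v⟫ := real_inner_comm _ _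
      simp only [cpsi] at hstrong
      have e1 : ⟪v - Nmap L α P y, Tmap L α P y⟫
          = ⟪v, Tmap L α P y⟫ - ⟪Nmap L α P y, Tmap L α P y⟫ := inner_sub_left _ _ _
      rw [e1] at hstrong
      linarith [hstrong, c2, c3]
  · have h := comix_lower hg hP hL hα hαsum y (Tmap L α P y)
    have h2 : ⟪Tmap L α P y - Tmap L α P y, Nmap L α P y⟫ = 0 := by
      rw [sub_self, inner_zero_left]
    rw [h2, add_zero] at h
    exact h

end NFirm

end MainCtx


lemma combine_avg {t κ a b c : ℝ} (ht : 0 < t) (hκt : κ * (t+1) = t)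
    (hc : 0 ≤ t^2*a - 2*t*c + b) : κ * (a + 2*c + b) ≤ t*a + b := by
  have ht1 : 0 < t + 1 := by linarith
  have h1 : (t+1) * (t*a + b - κ*(a + 2*c + b)) = t^2*a - 2*t*c + b := by
    linear_combination (-(a + 2*c + b)) * hκt
  nlinarith [h1, hc, ht1]

set_option maxHeartbeats 2000000 in
/-- Proposition 4.3 (forward–backward): if `f` is convex and differentiable with a
`β`-Lipschitzian gradient, `β ∈ (0,2)`, the forward–backward iteration applied to `f` and
`h = comix(L_k,g_k)` converges weakly to a minimizer of `f + h`. -/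
theorem forwardBackward_comix [CompleteSpace H] [∀ k, CompleteSpace (G k)]
    (L : ∀ k, H →L[ℝ] G k) (g : ∀ k, (G k) → EReal) (α : Fin p → ℝ)
    (hg : ∀ k, Gamma0 (g k)) (hL : ∀ k, ‖L k‖ ≤ 1)
    (hα : ∀ k, α k ∈ Set.Ioc (0 : ℝ) 1) (hαsum : ∑ k, α k = 1)
    (f : H → ℝ) (hfconv : ConvexOn ℝ Set.univ f)
    (f' : H → H) (hf' : ∀ x : H, HasGradientAt f (f' x) x)
    (β : ℝ) (hβ : β ∈ Set.Ioo (0 : ℝ) 2)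
    (hlip : ∀ x y : H, ‖f' x - f' y‖ ≤ β * ‖x - y‖)
    (hsol : ∃ xs : H, ∀ w : H,
      ((f xs : ℝ) : EReal) + comix L g α xs ≤ ((f w : ℝ) : EReal) + comix L g α w)
    (P : ∀ k, G k → G k) (hP : ∀ k, IsProx (g k) (P k))
    (x y : ℕ → H)
    (hy : ∀ n, y n = x n - f' (x n))
    (hx : ∀ n, x (n + 1) = y n + ∑ k, α k •
      (ContinuousLinearMap.adjoint (L k)) (P k (L k (y n)) - L k (y n))) :
    ∃ xbar : H,
      (∀ w : H, ((f xbar : ℝ) : EReal) + comix L g α xbar ≤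
        ((f w : ℝ) : EReal) + comix L g α w) ∧
      ∀ u : H, Tendsto (fun n => (⟪x n, u⟫ : ℝ)) atTop (nhds (⟪xbar, u⟫ : ℝ)) := by
  classical
  have hβ0 : 0 < β := hβ.1
  have hβ2 : β < 2 := hβ.2
  set Amap : H → H := fun w => Tmap L α P (w - f' w) with hAmap
  have hline_f : ∀ (c d : H) (t : ℝ),
      HasDerivAt (fun s : ℝ => f (c + s • d)) ⟪f' (c + t • d), d⟫ t :=
    fun c d t => line_hasDerivAt hf' c d t
  have hfgrad : ∀ a w : H, f a + ⟪f' a, w - a⟫ ≤ f w := by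
    intro a w
    have hu0 : HasDerivAt (fun t : ℝ => f (a + t • (w - a))) ⟪f' a, w - a⟫ 0 := by
      have := hline_f a (w - a) 0
      simpa using this
    have hb : ∀ t ∈ Set.Ioc (0:ℝ) 1,
        ((fun t : ℝ => f (a + t • (w - a))) t - (fun t : ℝ => f (a + t • (w - a))) 0) / t
          ≤ f w - f a := by
      intro t ht
      have hcv := hfconv.2 (Set.mem_univ a) (Set.mem_univ w)
        (by linarith [ht.2] : (0:ℝ) ≤ 1 - t) ht.1.le (by ring)
      have hxt : a + t • (w - a) = (1 - t) • a + t • w := by module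
      simp only [smul_eq_mul] at hcv
      simp only
      rw [hxt, div_le_iff₀ ht.1]
      have h0 : a + (0:ℝ) • (w - a) = a := by simp
      rw [h0]
      calc f ((1 - t) • a + t • w) - f a ≤ (1 - t) * f a + t * f w - f a := by
            linarith [hcv]
        _ = (f w - f a) * t := by ring
    have := deriv_le_of_slope hu0 hb
    linarith
  have hfdesc : ∀ a d : H, f (a + d) ≤ f a + ⟪f' a, d⟫ + β/2 * ‖d‖^2 :=
    fun a d => descent_lemma hline_f hβ0.le hlip a d
  have hBH : ∀ a b : H, f a + ⟪f' a, b - a⟫ + 1/(2*β) * ‖f' b - f' a‖^2 ≤ f b := by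
    intro a b
    set z : H := b - (1/β) • (f' b - f' a) with hz
    have h1 : f z ≤ f b + ⟪f' b, z - b⟫ + β/2 * ‖z - b‖^2 := by
      have := hfdesc b (z - b)
      have e : b + (z - b) = z := by abel
      rw [e] at this
      exact this
    have h2 : f a + ⟪f' a, z - a⟫ ≤ f z := hfgrad a z
    have ez : z - b = -((1/β) • (f' b - f' a)) := by rw [hz]; abel
    have e1 : ⟪f' b, z - b⟫ = -(1/β * ⟪f' b, f' b - f' a⟫) := by
      rw [ez, inner_neg_right, real_inner_smul_right]
    have e2 : ‖z - b‖^2 = (1/β)^2 * ‖f' b - f' a‖^2 := by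
      rw [ez, norm_neg, norm_smul, Real.norm_eq_abs,
        abs_of_pos (by positivity : (0:ℝ) < 1/β), mul_pow]
    have e3 : ⟪f' a, z - a⟫ = ⟪f' a, b - a⟫ - 1/β * ⟪f' a, f' b - f' a⟫ := by
      have e : z - a = (b - a) - (1/β) • (f' b - f' a) := by rw [hz]; abel
      rw [e, inner_sub_right, real_inner_smul_right]
    have e4' : 1/β * ⟪f' b, f' b - f' a⟫ - 1/β * ⟪f' a, f' b - f' a⟫
        = 1/β * ‖f' b - f' a‖^2 := by
      rw [← mul_sub, ← inner_sub_left, real_inner_self_eq_norm_sq]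
    have e5 : β/2 * ((1/β)^2 * ‖f' b - f' a‖^2) = 1/(2*β) * ‖f' b - f' a‖^2 := by
      field_simp
    have e6 : 1/β * ‖f' b - f' a‖^2 = 2 * (1/(2*β) * ‖f' b - f' a‖^2) := by
      field_simp
    rw [e1, e2] at h1
    rw [e3] at h2
    linarith [h1, h2, e4', e5, e6]
  have coco : ∀ a b : H, 1/β * ‖f' a - f' b‖^2 ≤ ⟪f' a - f' b, a - b⟫ := by
    intro a b
    have h1 := hBH a b
    have h2 := hBH b a
    have en : ‖f' a - f' b‖ = ‖f' b - f' a‖ := norm_sub_rev _ _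
    have ei1 : ⟪f' a, b - a⟫ = -⟪f' a, a - b⟫ := by
      rw [← inner_neg_right]; congr 1; abel
    have ei2 : ⟪f' a - f' b, a - b⟫ = ⟪f' a, a - b⟫ - ⟪f' b, a - b⟫ := inner_sub_left _ _ _
    have ei3 : ⟪f' b, a - b⟫ = -⟪f' b, b - a⟫ := by
      rw [← inner_neg_right]; congr 1; abel
    have e6 : 1/β * ‖f' b - f' a‖^2 = 2 * (1/(2*β) * ‖f' b - f' a‖^2) := by
      field_simp
    have en2 : ‖f' a - f' b‖^2 = ‖f' b - f' a‖^2 := by rw [en]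
    have en3 : 1/(2*β) * ‖f' a - f' b‖^2 = 1/(2*β) * ‖f' b - f' a‖^2 := by rw [en2]
    rw [en2]
    linarith [h1, h2, ei1, ei2, ei3, e6, en3]
  have hAiter : ∀ n, x (n+1) = Amap (x n) := by
    intro n
    rw [hx n]
    have e1 : ∑ k, α k • (ContinuousLinearMap.adjoint (L k)) (P k (L k (y n)) - L k (y n))
        = -∑ k, α k • (ContinuousLinearMap.adjoint (L k)) (L k (y n) - P k (L k (y n))) := by
      rw [← Finset.sum_neg_distrib]
      congr 1
      funext k
      rw [← smul_neg, ← map_neg, neg_sub]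
    rw [e1, hAmap]
    simp only [Tmap, Nmap]
    rw [hy n]
    abel
  set κ : ℝ := (2 - β)/2 with hκdef
  have hκ : 0 < κ := by rw [hκdef]; linarith
  set t : ℝ := (2 - β)/β with htdef
  have ht : 0 < t := by rw [htdef]; exact div_pos (by linarith) hβ0
  have hkey : ∀ a b : H, ‖Amap a - Amap b‖^2
      ≤ ‖a - b‖^2 - κ * ‖(a - Amap a) - (b - Amap b)‖^2 := by
    intro a b
    set e₁ : H := f' a - f' b with he1
    set e₂ : H := Nmap L α P (a - f' a) - Nmap L α P (b - f' b) with he2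
    have E2 : ‖Amap a - Amap b‖^2 ≤ ‖(a - f' a) - (b - f' b)‖^2 - ‖e₂‖^2 := by
      have hT : Amap a - Amap b = ((a - f' a) - (b - f' b)) - e₂ := by
        rw [hAmap]
        simp only [Tmap]
        rw [he2]
        abel
      rw [hT, norm_sub_sq_real]
      have hfirm := Nmap_firm hg hP hL hα hαsum (a - f' a) (b - f' b)
      rw [← he2] at hfirm
      linarith
    have E1 : ‖(a - f' a) - (b - f' b)‖^2 ≤ ‖a - b‖^2 - t * ‖e₁‖^2 := by
      have hS : (a - f' a) - (b - f' b) = (a - b) - e₁ := by rw [he1]; abel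
      rw [hS, norm_sub_sq_real]
      have hco := coco a b
      rw [← he1] at hco
      have hci : ⟪a - b, e₁⟫ = ⟪e₁, a - b⟫ := real_inner_comm _ _
      have harith : t * ‖e₁‖^2 + ‖e₁‖^2 = 2 * (1/β * ‖e₁‖^2) := by
        rw [htdef]
        field_simp
        ring
      linarith [hco, hci, harith]
    have hres : (a - Amap a) - (b - Amap b) = e₁ + e₂ := by
      rw [hAmap]
      simp only [Tmap]
      rw [he1, he2]
      abel
    have hcomb : κ * ‖e₁ + e₂‖^2 ≤ t * ‖e₁‖^2 + ‖e₂‖^2 := by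
      have hc : 0 ≤ t^2 * ‖e₁‖^2 - 2*t*⟪e₁, e₂⟫ + ‖e₂‖^2 := by
        have hh := sq_nonneg ‖t • e₁ - e₂‖
        rw [norm_sub_sq_real, norm_smul, Real.norm_eq_abs, abs_of_pos ht, mul_pow,
          real_inner_smul_left] at hh
        linarith
      have hκt : κ * (t + 1) = t := by
        rw [hκdef, htdef]
        field_simp
        ring
      have hexp : ‖e₁ + e₂‖^2 = ‖e₁‖^2 + 2*⟪e₁, e₂⟫ + ‖e₂‖^2 := norm_add_sq_real _ _
      rw [hexp]
      exact combine_avg ht hκt hc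
    rw [hres]
    linarith [E1, E2, hcomb]
  -- every fixed point of Amap is a minimizer of f + comix
  have fix_to_min : ∀ z : H, Amap z = z → ∀ w : H,
      ((f z : ℝ) : EReal) + comix L g α z ≤ ((f w : ℝ) : EReal) + comix L g α w := by
    intro z hzf w
    have hTys : Tmap L α P (z - f' z) = z := hzf
    have hNys : Nmap L α P (z - f' z) = -f' z := by
      have h1 : (z - f' z) - Nmap L α P (z - f' z) = z := by
        have h0 : Tmap L α P (z - f' z) = (z - f' z) - Nmap L α P (z - f' z) := rfl
        rw [← h0, hTys]
      have h2 : z - f' z = z + Nmap L α P (z - f' z) := sub_eq_iff_eq_add.mp h1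
      have h2' : Nmap L α P (z - f' z) + z = z - f' z := by
        rw [add_comm]; exact h2.symm
      have h3 : Nmap L α P (z - f' z) = (z - f' z) - z := eq_sub_of_add_eq h2'
      rw [h3]; abel
    have hval : comix L g α z = ((cT L g α P (z - f' z) : ℝ) : EReal) := by
      have := comix_at_T hg hP hL hα hαsum (z - f' z)
      rwa [hTys] at this
    have hlow : ((cT L g α P (z - f' z) + ⟪w - z, Nmap L α P (z - f' z)⟫ : ℝ) : EReal)
        ≤ comix L g α w := by
      have := comix_lower hg hP hL hα hαsum (z - f' z) w
      rwa [hTys] at this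
    rw [hval]
    calc ((f z : ℝ) : EReal) + ((cT L g α P (z - f' z) : ℝ) : EReal)
        = ((f z + cT L g α P (z - f' z) : ℝ) : EReal) := by rw [EReal.coe_add]
      _ ≤ ((f w + (cT L g α P (z - f' z) + ⟪w - z, Nmap L α P (z - f' z)⟫) : ℝ) : EReal) := by
          rw [EReal.coe_le_coe_iff, hNys]
          have hgr := hfgrad z w
          have hc : ⟪f' z, w - z⟫ = ⟪w - z, f' z⟫ := real_inner_comm _ _
          have hb : ⟪w - z, -f' z⟫ = -⟪w - z, f' z⟫ := inner_neg_right _ _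
          linarith [hgr, hc, hb]
      _ = ((f w : ℝ) : EReal) + ((cT L g α P (z - f' z)
            + ⟪w - z, Nmap L α P (z - f' z)⟫ : ℝ) : EReal) := by rw [EReal.coe_add]
      _ ≤ ((f w : ℝ) : EReal) + comix L g α w := add_le_add_right hlow _
  -- the solution gives a fixed point of Amap
  obtain ⟨xs, hxsmin⟩ := hsol
  have hfix_xs : Amap xs = xs := by
    -- comix xs is finite
    have hlow0 : ∀ w : H, ((cT L g α P 0 + ⟪w - Tmap L α P 0, Nmap L α P 0⟫ : ℝ) : EReal)
        ≤ comix L g α w := fun w => comix_lower hg hP hL hα hαsum 0 w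
    have hnotbot : comix L g α xs ≠ ⊥ := by
      intro hb
      have := hlow0 xs
      rw [hb] at this
      exact absurd this (by simp)
    have hnottop : comix L g α xs ≠ ⊤ := by
      intro htp
      have hmin0 := hxsmin (Tmap L α P 0)
      rw [htp, comix_at_T hg hP hL hα hαsum 0] at hmin0
      rw [← EReal.coe_add] at hmin0
      have h1 : ((f xs : ℝ) : EReal) + ⊤ = ⊤ := by
        rw [EReal.coe_add_top]
      rw [h1] at hmin0
      exact absurd (top_le_iff.mp hmin0) (EReal.coe_ne_top _)
    obtain ⟨rs, hrs⟩ : ∃ rs : ℝ, comix L g α xs = (rs : EReal) :=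
      ⟨_, (EReal.coe_toReal hnottop hnotbot).symm⟩
    -- convexity-type bound for comix along segments from xs
    have hconvh : ∀ (w : H) (q : ℝ), comix L g α w = (q : EReal) →
        ∀ τ : ℝ, τ ∈ Set.Ioc (0:ℝ) 1 →
        comix L g α (xs + τ • (w - xs)) ≤ (((1-τ)*rs + τ*q : ℝ) : EReal) := by
      intro w q hq τ hτ
      rw [comix, fconj]
      apply iSup_le
      intro v
      rcases eq_or_ne (fconj (fun x : H => ∑ k, (α k : EReal) * menv (g k) (L k x)) v) ⊤
        with htop2 | htop2
      · rw [htop2]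
        have h1 : (⊤ : EReal) - QK v = ⊤ := by rw [QK]; exact EReal.top_sub_coe _
        rw [h1]
        have h2 : ((⟪v, xs + τ • (w - xs)⟫ : ℝ) : EReal) - ⊤ = ⊥ := by simp
        rw [h2]
        exact bot_le
      · have hbot2 := fconjPhi_ne_bot (L := L) (g := g) (α := α) (P := P) hg hP v
        obtain ⟨m, hm⟩ : ∃ m : ℝ,
            fconj (fun x : H => ∑ k, (α k : EReal) * menv (g k) (L k x)) v = (m : EReal) :=
          ⟨_, (EReal.coe_toReal htop2 hbot2).symm⟩
        have hterm : ∀ u : H, ((⟪v, u⟫ - (m - ‖v‖^2/2) : ℝ) : EReal) ≤ comix L g α u := by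
          intro u
          rw [comix, fconj]
          refine le_trans ?_ (le_iSup _ v)
          rw [hm, QK, ← EReal.coe_sub, ← EReal.coe_sub]
        have hb1 : ⟪v, xs⟫ - (m - ‖v‖^2/2) ≤ rs := by
          have := hterm xs
          rw [hrs, EReal.coe_le_coe_iff] at this
          exact this
        have hb2 : ⟪v, w⟫ - (m - ‖v‖^2/2) ≤ q := by
          have := hterm w
          rw [hq, EReal.coe_le_coe_iff] at this
          exact this
        rw [hm, QK, ← EReal.coe_sub, ← EReal.coe_sub, EReal.coe_le_coe_iff]
        have hexp : ⟪v, xs + τ • (w - xs)⟫ = ⟪v, xs⟫ + τ * (⟪v, w⟫ - ⟪v, xs⟫) := by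
          rw [inner_add_right, real_inner_smul_right, inner_sub_right]
        rw [hexp]
        nlinarith [hb1, hb2, hτ.1.le, hτ.2, mul_le_mul_of_nonneg_left hb2 hτ.1.le,
          mul_le_mul_of_nonneg_left hb1 (by linarith [hτ.2] : (0:ℝ) ≤ 1 - τ)]
    -- subgradient inequality at xs
    have hsubgrad : ∀ w : H, ((rs - ⟪w - xs, f' xs⟫ : ℝ) : EReal) ≤ comix L g α w := by
      intro w
      rcases eq_or_ne (comix L g α w) ⊤ with htp | htp
      · rw [htp]; exact le_top
      have hbt : comix L g α w ≠ ⊥ := by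
        intro hb
        have := hlow0 w
        rw [hb] at this
        exact absurd this (by simp)
      obtain ⟨q, hq⟩ : ∃ q : ℝ, comix L g α w = (q : EReal) :=
        ⟨_, (EReal.coe_toReal htp hbt).symm⟩
      rw [hq, EReal.coe_le_coe_iff]
      have hu0 : HasDerivAt (fun τ : ℝ => f (xs + τ • (w - xs))) ⟪f' xs, w - xs⟫ 0 := by
        have := hline_f xs (w - xs) 0
        simpa using this
      have hslope : ∀ τ ∈ Set.Ioc (0:ℝ) 1,
          ((fun τ : ℝ => -(f (xs + τ • (w - xs)))) τ
            - (fun τ : ℝ => -(f (xs + τ • (w - xs)))) 0) / τ ≤ q - rs := by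
        intro τ hτ
        have hmin := hxsmin (xs + τ • (w - xs))
        have hcv := hconvh w q hq τ hτ
        have hchain : ((f xs : ℝ) : EReal) + (rs : EReal)
            ≤ ((f (xs + τ • (w - xs)) : ℝ) : EReal) + (((1-τ)*rs + τ*q : ℝ) : EReal) := by
          rw [← hrs]
          exact le_trans hmin (add_le_add_right hcv _)
        rw [← EReal.coe_add, ← EReal.coe_add, EReal.coe_le_coe_iff] at hchain
        simp only
        rw [div_le_iff₀ hτ.1]
        have h0 : xs + (0:ℝ) • (w - xs) = xs := by simp
        rw [h0]
        nlinarith [hchain]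
      have := deriv_le_of_slope hu0.neg hslope
      have hc : ⟪f' xs, w - xs⟫ = ⟪w - xs, f' xs⟫ := real_inner_comm _ _
      linarith
    -- combine the two subgradient relations
    set ys : H := xs - f' xs with hys
    have a1 : cT L g α P ys + ⟪xs - Tmap L α P ys, Nmap L α P ys⟫ ≤ rs := by
      have := comix_lower hg hP hL hα hαsum ys xs
      rw [hrs, EReal.coe_le_coe_iff] at this
      exact this
    have a2 : rs - ⟪Tmap L α P ys - xs, f' xs⟫ ≤ cT L g α P ys := by
      have := hsubgrad (Tmap L α P ys)
      rw [comix_at_T hg hP hL hα hαsum ys, EReal.coe_le_coe_iff] at this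
      exact this
    set c : H := f' xs + Nmap L α P ys with hc
    have e1 : xs - Tmap L α P ys = c := by
      simp only [Tmap]
      rw [hc, hys]
      abel
    have e2 : Tmap L α P ys - xs = -c := by rw [← e1]; abel
    have e3 : ⟪-c, f' xs⟫ = -⟪c, f' xs⟫ := inner_neg_left _ _
    have e4 : ⟪c, c⟫ = ⟪c, f' xs⟫ + ⟪c, Nmap L α P ys⟫ := by
      conv_lhs => rw [hc]
      rw [inner_add_right]
    have hc2 : ⟪c, c⟫ ≤ 0 := by
      rw [e1] at a1
      rw [e2, e3] at a2
      linarith [a1, a2, e4]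
    have hczero : c = 0 := by
      have h0 := real_inner_self_eq_norm_sq c
      have : ‖c‖ = 0 := by nlinarith [norm_nonneg c, h0, hc2]
      exact norm_eq_zero.mp this
    have : Tmap L α P ys = xs := by
      have := e1
      rw [hczero] at this
      have h2 : xs - Tmap L α P ys = 0 := this
      have := sub_eq_zero.mp h2
      exact this.symm
    rw [hAmap]
    simp only
    rw [← hys]
    exact this
  -- apply the abstract convergence theorem
  obtain ⟨zbar, hzfix, hzconv⟩ := weak_convergence_km Amap x κ hκ hkey hAiter ⟨xs, hfix_xs⟩
  exact ⟨zbar, fix_to_min zbar hzfix, hzconv⟩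

end
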